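/- There exists a group homomorphism T : G(9₄₈) → G(9₄₈) satisfying T(x₁) = x₃, T(x₂) = x₆⁻¹x₃x₆, T(x₃) = x₉, T(x₄) = x₆, T(x₅) = x₁x₆x₁⁻¹, T(x₆) = x₁, T(x₇) = x₁x₄x₁⁻¹, T(x₈) = x₄, T(x₉) = x₁x₈x₁⁻¹; that is, these assignments on the generators respect all nine defining relations and hence define an endomorphism of G(9₄₈). -/

import Mathlib

/-- Relators of the Wirtinger presentation of the group of the knot `9₄₈`.
Generator `i : Fin 9` stands for `xᵢ₊₁`; the relation `a b a⁻¹ = c` is encoded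
as the relator `a * b * a⁻¹ * c⁻¹`. -/
def rels948 : Set (FreeGroup (Fin 9)) :=
  let x : Fin 9 → FreeGroup (Fin 9) := FreeGroup.of
  { x 0 * x 1 * (x 0)⁻¹ * (x 2)⁻¹,
    x 3 * x 1 * (x 3)⁻¹ * (x 0)⁻¹,
    x 1 * x 3 * (x 1)⁻¹ * (x 7)⁻¹,
    x 5 * x 7 * (x 5)⁻¹ * (x 6)⁻¹,
    x 6 * x 0 * (x 6)⁻¹ * (x 5)⁻¹,
    x 0 * x 6 * (x 0)⁻¹ * (x 8)⁻¹,
    x 4 * x 8 * (x 4)⁻¹ * (x 2)⁻¹,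
    x 2 * x 5 * (x 2)⁻¹ * (x 4)⁻¹,
    x 5 * x 3 * (x 5)⁻¹ * (x 4)⁻¹ }

/-- The group `G(9₄₈)` of the knot `9₄₈`, given by its Wirtinger presentation. -/
def G948 : Type := PresentedGroup rels948

instance : Group G948 := by unfold G948; infer_instance

/-- The image `xᵢ₊₁` of the `i`-th generator in `G(9₄₈)`. -/
def x948 (i : Fin 9) : G948 := PresentedGroup.of i

/-- There is an endomorphism `T` of `G(9₄₈)` acting on the generators by
`T(x₁) = x₃`, `T(x₂) = x₆⁻¹x₃x₆`, `T(x₃) = x₉`, `T(x₄) = x₆`, `T(x₅) = x₁x₆x₁⁻¹`,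
`T(x₆) = x₁`, `T(x₇) = x₁x₄x₁⁻¹`, `T(x₈) = x₄`, `T(x₉) = x₁x₈x₁⁻¹`. -/
private lemma relG948 {a b c : Fin 9}
    (h : FreeGroup.of a * FreeGroup.of b * (FreeGroup.of a)⁻¹ * (FreeGroup.of c)⁻¹ ∈ rels948) :
    x948 a * x948 b * (x948 a)⁻¹ = x948 c := by
  have h1 : (PresentedGroup.mk rels948
      (FreeGroup.of a * FreeGroup.of b * (FreeGroup.of a)⁻¹ * (FreeGroup.of c)⁻¹) :
      PresentedGroup rels948) = 1 :=
    (QuotientGroup.eq_one_iff _).mpr (Subgroup.subset_normalClosure h)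
  have h2 : (x948 a * x948 b * (x948 a)⁻¹ * (x948 c)⁻¹ : G948) = 1 := by
    simp only [x948, PresentedGroup.of, map_mul, map_inv] at h1 ⊢
    exact h1
  simpa using mul_eq_one_iff_eq_inv.mp h2

private def f948 : Fin 9 → G948 :=
  ![x948 2, (x948 5)⁻¹ * x948 2 * x948 5, x948 8, x948 5, x948 0 * x948 5 * (x948 0)⁻¹,
    x948 0, x948 0 * x948 3 * (x948 0)⁻¹, x948 3, x948 0 * x948 7 * (x948 0)⁻¹]

private lemma f948_0 : f948 0 = x948 2 := rfl
private lemma f948_1 : f948 1 = (x948 5)⁻¹ * x948 2 * x948 5 := rfl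
private lemma f948_2 : f948 2 = x948 8 := rfl
private lemma f948_3 : f948 3 = x948 5 := rfl
private lemma f948_4 : f948 4 = x948 0 * x948 5 * (x948 0)⁻¹ := rfl
private lemma f948_5 : f948 5 = x948 0 := rfl
private lemma f948_6 : f948 6 = x948 0 * x948 3 * (x948 0)⁻¹ := rfl
private lemma f948_7 : f948 7 = x948 3 := rfl
private lemma f948_8 : f948 8 = x948 0 * x948 7 * (x948 0)⁻¹ := rfl


theorem exists_endomorphism_T :
    ∃ T : G948 →* G948,
      T (x948 0) = x948 2 ∧
      T (x948 1) = (x948 5)⁻¹ * x948 2 * x948 5 ∧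
      T (x948 2) = x948 8 ∧
      T (x948 3) = x948 5 ∧
      T (x948 4) = x948 0 * x948 5 * (x948 0)⁻¹ ∧
      T (x948 5) = x948 0 ∧
      T (x948 6) = x948 0 * x948 3 * (x948 0)⁻¹ ∧
      T (x948 7) = x948 3 ∧
      T (x948 8) = x948 0 * x948 7 * (x948 0)⁻¹ := by
  have r1 := relG948 (a := 0) (b := 1) (c := 2) (Set.mem_insert _ _)
  have r2 := relG948 (a := 3) (b := 1) (c := 0)
    (Set.mem_insert_of_mem _ (Set.mem_insert _ _))
  have r3 := relG948 (a := 1) (b := 3) (c := 7)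
    (Set.mem_insert_of_mem _ (Set.mem_insert_of_mem _ (Set.mem_insert _ _)))
  have r4 := relG948 (a := 5) (b := 7) (c := 6)
    (Set.mem_insert_of_mem _ (Set.mem_insert_of_mem _ (Set.mem_insert_of_mem _
      (Set.mem_insert _ _))))
  have r5 := relG948 (a := 6) (b := 0) (c := 5)
    (Set.mem_insert_of_mem _ (Set.mem_insert_of_mem _ (Set.mem_insert_of_mem _
      (Set.mem_insert_of_mem _ (Set.mem_insert _ _)))))
  have r6 := relG948 (a := 0) (b := 6) (c := 8)
    (Set.mem_insert_of_mem _ (Set.mem_insert_of_mem _ (Set.mem_insert_of_mem _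
      (Set.mem_insert_of_mem _ (Set.mem_insert_of_mem _ (Set.mem_insert _ _))))))
  have r7 := relG948 (a := 4) (b := 8) (c := 2)
    (Set.mem_insert_of_mem _ (Set.mem_insert_of_mem _ (Set.mem_insert_of_mem _
      (Set.mem_insert_of_mem _ (Set.mem_insert_of_mem _ (Set.mem_insert_of_mem _
      (Set.mem_insert _ _)))))))
  have r8 := relG948 (a := 2) (b := 5) (c := 4)
    (Set.mem_insert_of_mem _ (Set.mem_insert_of_mem _ (Set.mem_insert_of_mem _
      (Set.mem_insert_of_mem _ (Set.mem_insert_of_mem _ (Set.mem_insert_of_mem _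
      (Set.mem_insert_of_mem _ (Set.mem_insert _ _))))))))
  have r9 := relG948 (a := 5) (b := 3) (c := 4)
    (Set.mem_insert_of_mem _ (Set.mem_insert_of_mem _ (Set.mem_insert_of_mem _
      (Set.mem_insert_of_mem _ (Set.mem_insert_of_mem _ (Set.mem_insert_of_mem _
      (Set.mem_insert_of_mem _ (Set.mem_insert_of_mem _ rfl))))))))
  have e8 : x948 8 = (x948 4)⁻¹ * x948 2 * x948 4 := by rw [← r7]; group
  have e3 : x948 3 = (x948 5)⁻¹ * x948 4 * x948 5 := by rw [← r9]; group
  have hrel : ∀ r ∈ rels948, FreeGroup.lift f948 r = 1 := by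
    intro r hr
    simp only [rels948, Set.mem_insert_iff, Set.mem_singleton_iff] at hr
    rcases hr with h|h|h|h|h|h|h|h|h <;> subst h <;>
      simp only [map_mul, map_inv, FreeGroup.lift_apply_of, f948_0, f948_1, f948_2, f948_3,
        f948_4, f948_5, f948_6, f948_7, f948_8] <;>
      rw [mul_inv_eq_one]
    · rw [e8, r8.symm]; group
    · group
    · rw [e3, r8.symm]; group
    · rw [r1.symm, r2.symm]; group
    · rw [r1.symm, r3.symm]; group
    · rw [r6.symm, r4.symm]; group
    · rw [r6.symm, r5.symm]; group
  refine ⟨PresentedGroup.toGroup hrel, ?_, ?_, ?_, ?_, ?_, ?_, ?_, ?_, ?_⟩ <;>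
    exact PresentedGroup.toGroup.of hrel
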